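/- If 0 < ν < 1 - μ with μ > 0 and z ≥ 2 is a real number, then there exists a constant C depending only on μ and ν such that ∑_{k=1}^{∞} log(k+z)/((k+z)^{1-μ} k^{1-ν}) ≤ C (log z)/z^{1-μ-ν}. -/

import Mathlib

open Real

lemma aux_bern_neg {u t : ℝ} (hu : -1 < u) (ht : t ≤ 0) : 1 + t * u ≤ (1 + u) ^ t := by
  have h1 : 0 < 1 + u := by linarith
  rcases le_or_gt (1 + t * u) 0 with h | h
  · exact h.trans (Real.rpow_pos_of_pos h1 t).le
  · rw [← Real.log_le_log_iff h (Real.rpow_pos_of_pos h1 t), Real.log_rpow h1]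
    have h2 := Real.log_le_sub_one_of_pos h
    have h3 := Real.log_le_sub_one_of_pos h1
    calc Real.log (1 + t * u) ≤ (1 + t * u) - 1 := h2
      _ = t * u := by ring
      _ ≤ t * Real.log (1 + u) := mul_le_mul_of_nonpos_left (by linarith) ht

lemma aux_step {s : ℝ} (hs0 : 0 < s) (hs1 : s ≤ 1) {x : ℝ} (hx : 0 ≤ x) :
    x ^ s + s * (x + 1) ^ (s - 1) ≤ (x + 1) ^ s := by
  have hy : (0:ℝ) < x + 1 := by linarith
  have hd1 : 1 / (x + 1) ≤ 1 := by rw [div_le_one hy]; linarith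
  have hsplit : x = (x + 1) * (1 + (-1 / (x + 1))) := by field_simp; ring
  have hb : (1 + (-1 / (x + 1))) ^ s ≤ 1 + s * (-1 / (x + 1)) := by
    apply rpow_one_add_le_one_add_mul_self _ hs0.le hs1
    rw [neg_div]; linarith
  have h0 : 0 ≤ 1 + (-1 / (x + 1)) := by rw [neg_div]; linarith
  have key : x ^ s ≤ (x + 1) ^ s - s * (x + 1) ^ (s - 1) := by
    calc x ^ s = (x + 1) ^ s * (1 + (-1 / (x + 1))) ^ s := by
          rw [← Real.mul_rpow hy.le h0, ← hsplit]
      _ ≤ (x + 1) ^ s * (1 + s * (-1 / (x + 1))) :=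
          mul_le_mul_of_nonneg_left hb (Real.rpow_nonneg hy.le s)
      _ = (x + 1) ^ s - s * ((x + 1) ^ s / (x + 1)) := by ring
      _ = (x + 1) ^ s - s * (x + 1) ^ (s - 1) := by rw [Real.rpow_sub_one hy.ne']
  linarith

lemma aux_head_sum {s : ℝ} (hs0 : 0 < s) (hs1 : s ≤ 1) (N : ℕ) :
    ∑ k ∈ Finset.Icc 1 N, (k : ℝ) ^ (s - 1) ≤ (N : ℝ) ^ s / s + 1 := by
  induction N with
  | zero => simp [Real.zero_rpow hs0.ne']
  | succ N ih =>
    rw [Finset.sum_Icc_succ_top (by omega : 1 ≤ N + 1)]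
    have hstep := aux_step hs0 hs1 (Nat.cast_nonneg N : (0:ℝ) ≤ N)
    have hc : ((N + 1 : ℕ) : ℝ) = (N : ℝ) + 1 := by push_cast; ring
    rw [hc]
    have heq : ((N:ℝ) + 1) ^ (s - 1) + (N:ℝ) ^ s / s
        = ((N:ℝ) ^ s + s * ((N:ℝ) + 1) ^ (s - 1)) / s := by
      field_simp
      ring
    have : ((N:ℝ) + 1) ^ (s - 1) + (N:ℝ) ^ s / s ≤ ((N:ℝ) + 1) ^ s / s := by
      rw [heq]
      exact div_le_div_of_nonneg_right hstep hs0.le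
    linarith

lemma aux_tail_ptwise {t : ℝ} (ht : t < 0) {k : ℕ} (hk : 2 ≤ k) :
    (k : ℝ) ^ (t - 1) ≤ (((k - 1 : ℕ) : ℝ) ^ t - (k : ℝ) ^ t) / (-t) := by
  have hy : (2:ℝ) ≤ (k:ℝ) := by exact_mod_cast hk
  have hy0 : (0:ℝ) < (k:ℝ) := by linarith
  have hcast : ((k - 1 : ℕ) : ℝ) = (k : ℝ) - 1 := by
    have : 1 ≤ k := by omega
    rw [Nat.cast_sub this, Nat.cast_one]
  have hsplit : (k:ℝ) - 1 = (k:ℝ) * (1 + (-1 / (k:ℝ))) := by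
    field_simp
    ring
  have hu : -1 < -1 / (k:ℝ) := by
    rw [neg_div, neg_lt_neg_iff, div_lt_one hy0]; linarith
  have hb : 1 + t * (-1 / (k:ℝ)) ≤ (1 + (-1 / (k:ℝ))) ^ t := aux_bern_neg hu ht.le
  have h0 : 0 ≤ 1 + (-1 / (k:ℝ)) := by
    have : 1 / (k:ℝ) ≤ 1 := by rw [div_le_one hy0]; linarith
    rw [neg_div]; linarith
  have key : (k:ℝ) ^ t - t * (k:ℝ) ^ (t - 1) ≤ ((k:ℝ) - 1) ^ t := by
    calc (k:ℝ) ^ t - t * (k:ℝ) ^ (t - 1)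
        = (k:ℝ) ^ t - t * ((k:ℝ) ^ t / (k:ℝ)) := by rw [Real.rpow_sub_one hy0.ne']
      _ = (k:ℝ) ^ t * (1 + t * (-1 / (k:ℝ))) := by ring
      _ ≤ (k:ℝ) ^ t * (1 + (-1 / (k:ℝ))) ^ t :=
          mul_le_mul_of_nonneg_left hb (Real.rpow_nonneg hy0.le t)
      _ = ((k:ℝ) - 1) ^ t := by rw [← Real.mul_rpow hy0.le h0, ← hsplit]
  rw [le_div_iff₀ (by linarith : (0:ℝ) < -t), hcast]
  nlinarith [key]

lemma aux_tail_sum {t : ℝ} (ht : t < 0) {N : ℕ} (hN : 1 ≤ N) (n : ℕ) :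
    ∑ k ∈ Finset.range n, (if N < k then (k : ℝ) ^ (t - 1) else 0) ≤ (N : ℝ) ^ t / (-t) := by
  have hNt : 0 < (N:ℝ) ^ t / (-t) := by
    apply div_pos (Real.rpow_pos_of_pos (by exact_mod_cast hN) t) (by linarith)
  cases n with
  | zero => simpa using hNt.le
  | succ m =>
    rw [Finset.sum_range_succ']
    have h0 : (if N < 0 then ((0:ℕ) : ℝ) ^ (t - 1) else 0) = 0 := by simp
    rw [h0, add_zero]
    set K : ℕ → ℝ := fun i => ((max i N : ℕ) : ℝ) ^ t with hK
    have hterm : ∀ i, (if N < i + 1 then ((i + 1 : ℕ) : ℝ) ^ (t - 1) else 0)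
        ≤ (K i - K (i + 1)) / (-t) := by
      intro i
      by_cases h : N < i + 1
      · have hNi : N ≤ i := by omega
        have h2 : 2 ≤ i + 1 := by omega
        simp only [if_pos h, hK]
        have e1 : max i N = i := by omega
        have e2 : max (i + 1) N = i + 1 := by omega
        rw [e1, e2]
        have := aux_tail_ptwise ht h2
        simpa using this
      · simp only [if_neg h, hK]
        have e1 : max i N = N := by omega
        have e2 : max (i + 1) N = N := by omega
        rw [e1, e2, sub_self, zero_div]
    calc ∑ i ∈ Finset.range m, (if N < i + 1 then ((i+1 : ℕ) : ℝ) ^ (t - 1) else 0)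
        ≤ ∑ i ∈ Finset.range m, (K i - K (i + 1)) / (-t) := Finset.sum_le_sum fun i _ => hterm i
      _ = (∑ i ∈ Finset.range m, (K i - K (i + 1))) / (-t) := by rw [Finset.sum_div]
      _ = (K 0 - K m) / (-t) := by rw [Finset.sum_range_sub' K m]
      _ ≤ (N:ℝ) ^ t / (-t) := by
          apply div_le_div_of_nonneg_right _ (by linarith : (0:ℝ) ≤ -t)
          have h1 : K 0 = (N:ℝ) ^ t := by simp [hK]
          have h2 : 0 ≤ K m := Real.rpow_nonneg (Nat.cast_nonneg _) t
          linarith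

set_option maxHeartbeats 1000000 in
theorem log_weighted_sum_bound_translate (mu nu : ℝ) (hmu : 0 < mu) (hnu : 0 < nu)
    (hsum : nu < 1 - mu) :
    ∃ C : ℝ, 0 < C ∧ ∀ z : ℝ, 2 ≤ z →
      (∑' k : ℕ, if 1 ≤ k then
          Real.log ((k : ℝ) + z) * ((k : ℝ) + z) ^ (mu - 1) * (k : ℝ) ^ (nu - 1) else 0)
        ≤ C * Real.log z / z ^ (1 - mu - nu) := by
  set eps := (1 - mu - nu) / 2 with heps
  have heps0 : 0 < eps := by rw [heps]; linarith
  set s := mu + nu - 1 with hsdef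
  have hs_neg : s < 0 := by rw [hsdef]; linarith
  have hse : s = -(2 * eps) := by rw [hsdef, heps]; ring
  have hnu1 : nu ≤ 1 := by linarith
  refine ⟨3 * (2 / nu + 1) + 1 / eps + 2 / eps ^ 2 + 1, ?_, ?_⟩
  · have h1 : 0 < 2 / nu := div_pos two_pos hnu
    have h2 : 0 < 1 / eps := div_pos one_pos heps0
    have h3 : 0 < 2 / eps ^ 2 := div_pos two_pos (by positivity)
    linarith
  intro z hz
  have hz0 : (0 : ℝ) < z := by linarith
  have hz1 : (1 : ℝ) ≤ z := by linarith
  have hlz0 : 0 ≤ Real.log z := Real.log_nonneg hz1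
  have hlzhalf : 1 / 2 ≤ Real.log z := by
    have h2 := Real.log_two_gt_d9
    have := Real.log_le_log two_pos hz
    linarith
  set N := ⌈z⌉₊ with hNdef
  have hzN : z ≤ (N : ℝ) := Nat.le_ceil z
  have hN2 : 2 ≤ N := by
    have : (2 : ℝ) ≤ (N : ℝ) := le_trans hz hzN
    exact_mod_cast this
  have hN1 : 1 ≤ N := by omega
  have hNle : (N : ℝ) ≤ 2 * z := by
    have := Nat.ceil_lt_add_one hz0.le
    have : (N : ℝ) < z + 1 := this
    linarith
  -- the summand
  set f : ℕ → ℝ := fun k => if 1 ≤ k then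
      Real.log ((k : ℝ) + z) * ((k : ℝ) + z) ^ (mu - 1) * (k : ℝ) ^ (nu - 1) else 0 with hf
  have hf_nonneg : ∀ k, 0 ≤ f k := by
    intro k
    rw [hf]
    dsimp only
    split
    · have hk1 : (1 : ℝ) ≤ (k : ℝ) := by exact_mod_cast ‹1 ≤ k›
      have : (1 : ℝ) ≤ (k : ℝ) + z := by linarith
      exact mul_nonneg (mul_nonneg (Real.log_nonneg this)
        (Real.rpow_nonneg (by linarith) _)) (Real.rpow_nonneg (by positivity) _)
    · exact le_rfl
  apply Real.tsum_le_of_sum_range_le hf_nonneg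
  intro n
  set D := 3 * Real.log z * z ^ (mu - 1) with hD
  have hD0 : 0 ≤ D := by
    rw [hD]
    exact mul_nonneg (mul_nonneg (by norm_num) hlz0) (Real.rpow_nonneg hz0.le _)
  set c2 := 1 / eps * z ^ (-eps) with hc2
  have hc20 : 0 ≤ c2 := by
    rw [hc2]
    exact mul_nonneg (by positivity) (Real.rpow_nonneg hz0.le _)
  set b : ℕ → ℝ := fun k => if k ∈ Finset.Icc 1 N then D * (k : ℝ) ^ (nu - 1) else 0 with hb
  set g1 : ℕ → ℝ := fun k => if N < k then (k : ℝ) ^ (s - 1) else 0 with hg1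
  set g2 : ℕ → ℝ := fun k => if N < k then (k : ℝ) ^ (-eps - 1) else 0 with hg2
  have ptwise : ∀ k, f k ≤ b k + 2 * Real.log z * g1 k + c2 * g2 k := by
    intro k
    simp only [hf, hb, hg1, hg2]
    by_cases h1 : 1 ≤ k
    · have hk1 : (1 : ℝ) ≤ (k : ℝ) := by exact_mod_cast h1
      rw [if_pos h1]
      by_cases h2 : k ≤ N
      · rw [if_pos (Finset.mem_Icc.mpr ⟨h1, h2⟩), if_neg (by omega), if_neg (by omega),
          mul_zero, mul_zero, add_zero, add_zero, hD]
        apply mul_le_mul_of_nonneg_right _ (Real.rpow_nonneg (Nat.cast_nonneg k) _)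
        have hkN : (k : ℝ) ≤ (N : ℝ) := by exact_mod_cast h2
        have hzz : 4 ≤ z * z := by nlinarith
        have h4z : 4 * z ≤ z * z * z := by nlinarith [mul_le_mul_of_nonneg_right hzz hz0.le]
        have hsum3 : (k : ℝ) + z ≤ z ^ (3 : ℕ) := by nlinarith [h4z]
        have hlog3 : Real.log ((k : ℝ) + z) ≤ 3 * Real.log z := by
          have h := Real.log_le_log (by linarith : (0:ℝ) < (k : ℝ) + z) hsum3
          rw [Real.log_pow] at h
          push_cast at h
          linarith
        have hpow : ((k : ℝ) + z) ^ (mu - 1) ≤ z ^ (mu - 1) :=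
          Real.rpow_le_rpow_of_nonpos hz0 (by linarith) (by linarith)
        exact mul_le_mul hlog3 hpow (Real.rpow_nonneg (by linarith) _) (by linarith)
      · have h2' : N < k := by omega
        rw [if_neg (by simp only [Finset.mem_Icc]; omega), if_pos h2', if_pos h2', zero_add]
        have hk0 : (0 : ℝ) < (k : ℝ) := by linarith
        have hzk : z ≤ (k : ℝ) := by
          have : (N : ℝ) < (k : ℝ) := by exact_mod_cast h2'
          linarith
        have hkz1 : (1 : ℝ) ≤ (k : ℝ) + z := by linarith
        have step1 : ((k : ℝ) + z) ^ (mu - 1) ≤ (k : ℝ) ^ (mu - 1) :=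
          Real.rpow_le_rpow_of_nonpos hk0 (by linarith) (by linarith)
        have hmulpow : (k : ℝ) ^ (mu - 1) * (k : ℝ) ^ (nu - 1) = (k : ℝ) ^ (s - 1) := by
          rw [← Real.rpow_add hk0]; congr 1; rw [hsdef]; ring
        have hke : (k : ℝ) ^ eps * (k : ℝ) ^ (s - 1) = (k : ℝ) ^ (-eps - 1) := by
          rw [← Real.rpow_add hk0]; congr 1; rw [hse]; ring
        have step2 : Real.log ((k : ℝ) + z)
            ≤ 2 * Real.log z + 1 / eps * ((k : ℝ) ^ eps * z ^ (-eps)) := by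
          have e1 : Real.log ((k : ℝ) + z) ≤ Real.log (2 * (k : ℝ)) :=
            Real.log_le_log (by linarith) (by linarith)
          rw [Real.log_mul (by norm_num) hk0.ne'] at e1
          have e2 : Real.log (k : ℝ) - Real.log z = Real.log ((k : ℝ) / z) :=
            (Real.log_div hk0.ne' hz0.ne').symm
          have e3 : Real.log ((k : ℝ) / z) ≤ ((k : ℝ) / z) ^ eps / eps :=
            Real.log_le_rpow_div (by positivity) heps0
          have e4 : ((k : ℝ) / z) ^ eps = (k : ℝ) ^ eps * z ^ (-eps) := by
            rw [Real.div_rpow hk0.le hz0.le, Real.rpow_neg hz0.le, div_eq_mul_inv]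
          rw [e4] at e3
          have e5 : Real.log 2 ≤ Real.log z := Real.log_le_log two_pos hz
          have e6 : ((k : ℝ) ^ eps * z ^ (-eps)) / eps
              = 1 / eps * ((k : ℝ) ^ eps * z ^ (-eps)) := by ring
          rw [e6] at e3
          linarith
        calc Real.log ((k : ℝ) + z) * ((k : ℝ) + z) ^ (mu - 1) * (k : ℝ) ^ (nu - 1)
            ≤ Real.log ((k : ℝ) + z) * (k : ℝ) ^ (mu - 1) * (k : ℝ) ^ (nu - 1) := by
              apply mul_le_mul_of_nonneg_right _ (Real.rpow_nonneg hk0.le _)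
              exact mul_le_mul_of_nonneg_left step1 (Real.log_nonneg hkz1)
          _ = Real.log ((k : ℝ) + z) * (k : ℝ) ^ (s - 1) := by rw [mul_assoc, hmulpow]
          _ ≤ (2 * Real.log z + 1 / eps * ((k : ℝ) ^ eps * z ^ (-eps))) * (k : ℝ) ^ (s - 1) :=
              mul_le_mul_of_nonneg_right step2 (Real.rpow_nonneg hk0.le _)
          _ = 2 * Real.log z * (k : ℝ) ^ (s - 1) + c2 * (k : ℝ) ^ (-eps - 1) := by
              rw [hc2, add_mul, ← hke]; ring
    · have hk : k = 0 := by omega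
      subst hk
      simp [Finset.mem_Icc]
  -- sum the pointwise bounds
  have hbsum : ∑ k ∈ Finset.range n, b k ≤ D * ((N : ℝ) ^ nu / nu + 1) := by
    simp only [hb]
    calc ∑ k ∈ Finset.range n, (if k ∈ Finset.Icc 1 N then D * (k : ℝ) ^ (nu - 1) else 0)
        = ∑ k ∈ Finset.range n ∩ Finset.Icc 1 N, D * (k : ℝ) ^ (nu - 1) :=
          Finset.sum_ite_mem _ _ _
      _ ≤ ∑ k ∈ Finset.Icc 1 N, D * (k : ℝ) ^ (nu - 1) :=
          Finset.sum_le_sum_of_subset_of_nonneg Finset.inter_subset_right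
            (fun i _ _ => mul_nonneg hD0 (Real.rpow_nonneg (Nat.cast_nonneg i) _))
      _ = D * ∑ k ∈ Finset.Icc 1 N, (k : ℝ) ^ (nu - 1) := by rw [Finset.mul_sum]
      _ ≤ D * ((N : ℝ) ^ nu / nu + 1) :=
          mul_le_mul_of_nonneg_left (aux_head_sum hnu hnu1 N) hD0
  have hg1sum : ∑ k ∈ Finset.range n, g1 k ≤ (N : ℝ) ^ s / (-s) := by
    simp only [hg1]
    exact aux_tail_sum hs_neg hN1 n
  have hg2sum : ∑ k ∈ Finset.range n, g2 k ≤ (N : ℝ) ^ (-eps) / eps := by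
    simp only [hg2]
    have h := aux_tail_sum (by linarith : -eps < 0) hN1 n
    rw [neg_neg] at h
    exact h
  -- numeric estimates
  have hzspos : 0 < z ^ s := Real.rpow_pos_of_pos hz0 s
  have hNnu : (N : ℝ) ^ nu ≤ 2 * z ^ nu := by
    calc (N : ℝ) ^ nu ≤ (2 * z) ^ nu := Real.rpow_le_rpow (Nat.cast_nonneg N) hNle hnu.le
      _ = 2 ^ nu * z ^ nu := Real.mul_rpow (by norm_num) hz0.le
      _ ≤ 2 * z ^ nu := by
          have h : (2:ℝ) ^ nu ≤ 2 ^ (1:ℝ) := Real.rpow_le_rpow_of_exponent_le one_le_two hnu1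
          rw [Real.rpow_one] at h
          exact mul_le_mul_of_nonneg_right h (Real.rpow_nonneg hz0.le _)
  have hznu1 : (1 : ℝ) ≤ z ^ nu := Real.one_le_rpow hz1 hnu.le
  have hNs : (N : ℝ) ^ s ≤ z ^ s := Real.rpow_le_rpow_of_nonpos hz0 hzN hs_neg.le
  have hNe : (N : ℝ) ^ (-eps) ≤ z ^ (-eps) := Real.rpow_le_rpow_of_nonpos hz0 hzN (by linarith)
  have hzs : z ^ (mu - 1) * z ^ nu = z ^ s := by
    rw [← Real.rpow_add hz0]; congr 1; rw [hsdef]; ring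
  have hze : z ^ (-eps) * z ^ (-eps) = z ^ s := by
    rw [← Real.rpow_add hz0]; congr 1; rw [hse]; ring
  have hT1 : D * ((N : ℝ) ^ nu / nu + 1) ≤ 3 * (2 / nu + 1) * Real.log z * z ^ s := by
    have h1 : (N : ℝ) ^ nu / nu + 1 ≤ (2 / nu + 1) * z ^ nu := by
      have h2 := div_le_div_of_nonneg_right hNnu hnu.le
      have h3 : 2 * z ^ nu / nu = 2 / nu * z ^ nu := by ring
      rw [h3] at h2
      nlinarith
    calc D * ((N : ℝ) ^ nu / nu + 1) ≤ D * ((2 / nu + 1) * z ^ nu) :=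
          mul_le_mul_of_nonneg_left h1 hD0
      _ = 3 * (2 / nu + 1) * Real.log z * (z ^ (mu - 1) * z ^ nu) := by rw [hD]; ring
      _ = 3 * (2 / nu + 1) * Real.log z * z ^ s := by rw [hzs]
  have hT2 : 2 * Real.log z * ((N : ℝ) ^ s / (-s)) ≤ 1 / eps * Real.log z * z ^ s := by
    have hms : -s = 2 * eps := by rw [hse]; ring
    have h1 : (N : ℝ) ^ s / (-s) ≤ z ^ s / (2 * eps) := by
      rw [hms]
      exact div_le_div_of_nonneg_right hNs (by linarith)
    calc 2 * Real.log z * ((N : ℝ) ^ s / (-s)) ≤ 2 * Real.log z * (z ^ s / (2 * eps)) :=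
          mul_le_mul_of_nonneg_left h1 (by linarith)
      _ = 1 / eps * Real.log z * z ^ s := by
          field_simp
  have hT3 : c2 * ((N : ℝ) ^ (-eps) / eps) ≤ 2 / eps ^ 2 * Real.log z * z ^ s := by
    have h1 : (N : ℝ) ^ (-eps) / eps ≤ z ^ (-eps) / eps :=
      div_le_div_of_nonneg_right hNe heps0.le
    have h2 : (1 : ℝ) ≤ 2 * Real.log z := by linarith
    calc c2 * ((N : ℝ) ^ (-eps) / eps) ≤ c2 * (z ^ (-eps) / eps) :=
          mul_le_mul_of_nonneg_left h1 hc20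
      _ = 1 / eps ^ 2 * (z ^ (-eps) * z ^ (-eps)) := by
          rw [hc2]
          field_simp
      _ = 1 / eps ^ 2 * z ^ s := by rw [hze]
      _ = (1 / eps ^ 2 * z ^ s) * 1 := by ring
      _ ≤ (1 / eps ^ 2 * z ^ s) * (2 * Real.log z) := by
          apply mul_le_mul_of_nonneg_left h2
          have : (0:ℝ) ≤ 1 / eps ^ 2 := by positivity
          exact mul_nonneg this hzspos.le
      _ = 2 / eps ^ 2 * Real.log z * z ^ s := by ring
  have hrhs : (3 * (2 / nu + 1) + 1 / eps + 2 / eps ^ 2 + 1) * Real.log z / z ^ (1 - mu - nu)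
      = (3 * (2 / nu + 1) + 1 / eps + 2 / eps ^ 2 + 1) * Real.log z * z ^ s := by
    rw [div_eq_mul_inv, ← Real.rpow_neg hz0.le,
      show -(1 - mu - nu) = s by rw [hsdef]; ring]
  rw [hrhs]
  have hmain : ∑ k ∈ Finset.range n, f k
      ≤ D * ((N : ℝ) ^ nu / nu + 1) + 2 * Real.log z * ((N : ℝ) ^ s / (-s))
        + c2 * ((N : ℝ) ^ (-eps) / eps) := by
    calc ∑ k ∈ Finset.range n, f k
        ≤ ∑ k ∈ Finset.range n, (b k + 2 * Real.log z * g1 k + c2 * g2 k) :=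
          Finset.sum_le_sum fun k _ => ptwise k
      _ = (∑ k ∈ Finset.range n, b k) + 2 * Real.log z * (∑ k ∈ Finset.range n, g1 k)
          + c2 * (∑ k ∈ Finset.range n, g2 k) := by
          rw [Finset.sum_add_distrib, Finset.sum_add_distrib, Finset.mul_sum, Finset.mul_sum]
      _ ≤ _ := by
          apply add_le_add (add_le_add hbsum _) _
          · exact mul_le_mul_of_nonneg_left hg1sum (by linarith)
          · exact mul_le_mul_of_nonneg_left hg2sum hc20
  have hnn : 0 ≤ Real.log z * z ^ s := mul_nonneg hlz0 hzspos.le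
  calc ∑ k ∈ Finset.range n, f k
      ≤ 3 * (2 / nu + 1) * Real.log z * z ^ s + 1 / eps * Real.log z * z ^ s
        + 2 / eps ^ 2 * Real.log z * z ^ s := by linarith [hmain, hT1, hT2, hT3]
    _ = (3 * (2 / nu + 1) + 1 / eps + 2 / eps ^ 2) * (Real.log z * z ^ s) := by ring
    _ ≤ (3 * (2 / nu + 1) + 1 / eps + 2 / eps ^ 2 + 1) * (Real.log z * z ^ s) := by
        apply mul_le_mul_of_nonneg_right (by linarith) hnn
    _ = (3 * (2 / nu + 1) + 1 / eps + 2 / eps ^ 2 + 1) * Real.log z * z ^ s := by ring
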